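/- For every reduced π-ordered BDD B over a finite set PVar of Boolean variables and Act, every bijection γ from PVar onto a set of axis-aligned predicates, and every satisfiable propositional formula φ over predicates, there exists a reduced π-ordered BDD B' over PVar and Act such that: (1) every path from the root of B' to an action node is φ-consistent with respect to γ, i.e. there is an evaluation ε with ε ⊨ φ and, for every step (d_i, b_i) of the path, ε ⊨ γ(λ(d_i)) iff b_i = 1; and (2) ⟦B'⟧(γ^ε) = ⟦B⟧(γ^ε) for every evaluation ε with ε ⊨ φ. -/

import Mathlib

/-- Comparison relations for axis-aligned predicates. -/
inductive Cmp where
  | eq | ge | gt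
deriving DecidableEq

/-- An axis-aligned predicate `x ∼ c` over variables `Var` and domain `ℚ`. -/
structure APred (Var : Type) where
  x : Var
  cmp : Cmp
  c : ℚ

/-- Satisfaction of an axis-aligned predicate by an evaluation `ε : Var → ℚ`. -/
def APred.holds {Var : Type} (ε : Var → ℚ) (p : APred Var) : Bool :=
  match p.cmp with
  | .eq => decide (ε p.x = p.c)
  | .ge => decide (p.c ≤ ε p.x)
  | .gt => decide (p.c < ε p.x)

/-- A (multi-terminal) decision diagram with decision nodes labeled by `L`
and action nodes labeled by subsets of `Act`.  A rank function ensures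
acyclicity.  Taking `L` to be a type of Boolean variables yields BDDs;
taking `L = APred Var` yields PDDs. -/
structure DD (L : Type) (Act : Type) where
  /-- the (finite) set of nodes -/
  N : Type
  fin : Fintype N
  /-- decision nodes are labeled by `Sum.inl l` with `l : L`;
  action nodes are labeled by `Sum.inr A` with `A ⊆ Act`. -/
  label : N → L ⊕ Set Act
  /-- successor function (its values on action nodes are irrelevant) -/
  succ : N → Bool → N
  root : N
  rk : N → ℕ
  rk_lt : ∀ n b l, label n = Sum.inl l → rk (succ n b) < rk n

/-- Semantics of the subdiagram rooted at `n`, given a Boolean valuation of labels. -/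
def DD.semNode {L Act : Type} (B : DD L Act) (f : L → Bool) (n : B.N) : Set Act :=
  match h : B.label n with
  | Sum.inr A => A
  | Sum.inl l => B.semNode f (B.succ n (f l))
termination_by B.rk n
decreasing_by exact B.rk_lt n (f l) l h

/-- Semantics of a decision diagram, given a Boolean valuation of its labels. -/
def DD.sem {L Act : Type} (B : DD L Act) (f : L → Bool) : Set Act :=
  B.semNode f B.root

/-- A node is a decision node iff its label is a left injection. -/
def DD.IsDecision {L Act : Type} (B : DD L Act) (n : B.N) : Prop :=
  ∃ l, B.label n = Sum.inl l

/-- `π`-orderedness: labels strictly increase (w.r.t. the ranking `π` of labels)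
along edges between decision nodes. -/
def DD.Ordered {L Act : Type} (B : DD L Act) (π : L → ℕ) : Prop :=
  ∀ n b l l', B.label n = Sum.inl l → B.label (B.succ n b) = Sum.inl l' → π l < π l'

/-- The edge relation of a decision diagram. -/
def DD.Edge {L Act : Type} (B : DD L Act) (n m : B.N) : Prop :=
  B.IsDecision n ∧ ∃ b, m = B.succ n b

/-- The set of nodes reachable from `n`. -/
def DD.Reach {L Act : Type} (B : DD L Act) (n : B.N) : Set B.N :=
  {m | Relation.ReflTransGen B.Edge n m}

/-- Isomorphism of the subdiagrams rooted at `n` and `n'`: a bijection between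
the reachable node sets mapping root to root and preserving labels and successors. -/
def DD.Iso {L Act : Type} (B : DD L Act) (n n' : B.N) : Prop :=
  ∃ φ : B.N → B.N,
    Set.BijOn φ (B.Reach n) (B.Reach n') ∧
    φ n = n' ∧
    (∀ m ∈ B.Reach n, B.label (φ m) = B.label m) ∧
    (∀ m ∈ B.Reach n, B.IsDecision m → ∀ b, φ (B.succ m b) = B.succ (φ m) b)

/-- Reducedness: every decision node is essential and no two distinct nodes
root isomorphic subdiagrams. -/
def DD.Reduced {L Act : Type} (B : DD L Act) : Prop :=
  (∀ n, B.IsDecision n → B.succ n false ≠ B.succ n true) ∧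
  (∀ n n', B.Iso n n' → n = n')

/-- Following a sequence of decision bits from a node. -/
def DD.follow {L Act : Type} (B : DD L Act) : B.N → List Bool → B.N
  | n, [] => n
  | n, b :: bs => B.follow (B.succ n b) bs

/-- `bs` encodes a path from the root to an action node: all intermediate nodes
are decision nodes and the final node is an action node. -/
def DD.IsPathToAction {L Act : Type} (B : DD L Act) (bs : List Bool) : Prop :=
  (∀ i, i < bs.length → B.IsDecision (B.follow B.root (bs.take i))) ∧
  (∃ A : Set Act, B.label (B.follow B.root bs) = Sum.inr A)

/-- Predicate decision diagrams: decision diagrams labeled by axis-aligned predicates. -/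
abbrev PDD (Var Act : Type) := DD (APred Var) Act

/-- Semantics of a PDD on an evaluation `ε : Var → ℚ`. -/
def PDD.sem {Var Act : Type} (P : PDD Var Act) (ε : Var → ℚ) : Set Act :=
  DD.sem P (fun p => p.holds ε)

/-- The path encoded by `bs` is consistent with the evaluation `ε`:
at every step, the decision bit matches the truth value of the node's predicate. -/
def PDD.PathConsistentWith {Var Act : Type} (P : PDD Var Act) (bs : List Bool)
    (ε : Var → ℚ) : Prop :=
  ∀ i, (h : i < bs.length) → ∀ p, P.label (P.follow P.root (bs.take i)) = Sum.inl p →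
    p.holds ε = bs.get ⟨i, h⟩

/-- A PDD is consistent if every path from the root to an action node is
consistent with some evaluation. -/
def PDD.Consistent {Var Act : Type} (P : PDD Var Act) : Prop :=
  ∀ bs : List Bool, P.IsPathToAction bs → ∃ ε : Var → ℚ, P.PathConsistentWith bs ε

/-- The `γ`-lifting of an evaluation `ε : Var → ℚ` to a Boolean valuation of `PVar`. -/
def liftEval {Var PVar : Type} (γ : PVar → APred Var) (ε : Var → ℚ) : PVar → Bool :=
  fun x => (γ x).holds ε

/-- The PDD `γ(B)` arising from a BDD `B` by relabeling every decision node `d`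
with the predicate `γ (λ d)`. -/
def DD.relabel {L L' Act : Type} (B : DD L Act) (γ : L → L') : DD L' Act where
  N := B.N
  fin := B.fin
  label := fun n => (B.label n).map γ id
  succ := B.succ
  root := B.root
  rk := B.rk
  rk_lt := by
    intro n b l' h
    cases hl : B.label n with
    | inl l => exact B.rk_lt n b l hl
    | inr A => simp [hl, Sum.map] at h

/-- Propositional formulas over axis-aligned predicates. -/
inductive PForm (Var : Type) where
  | tt
  | pred (p : APred Var)
  | neg (φ : PForm Var)
  | conj (φ ψ : PForm Var)

/-- Satisfaction of a propositional formula by an evaluation. -/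
def PForm.Sat {Var : Type} (ε : Var → ℚ) : PForm Var → Prop
  | .tt => True
  | .pred p => p.holds ε = true
  | .neg φ => ¬ PForm.Sat ε φ
  | .conj φ ψ => PForm.Sat ε φ ∧ PForm.Sat ε ψ

section AuxGeneric

lemma DD.semNode_inr {L Act : Type} (B : DD L Act) (f : L → Bool) (n : B.N) (A : Set Act)
    (h : B.label n = Sum.inr A) : B.semNode f n = A := by
  rw [DD.semNode]; split <;> simp_all

lemma DD.semNode_inl {L Act : Type} (B : DD L Act) (f : L → Bool) (n : B.N) (l : L)
    (h : B.label n = Sum.inl l) : B.semNode f n = B.semNode f (B.succ n (f l)) := by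
  rw [DD.semNode]; split <;> simp_all

lemma DD.reach_self {L Act : Type} (B : DD L Act) (n : B.N) : n ∈ B.Reach n :=
  Relation.ReflTransGen.refl

lemma DD.reach_succ {L Act : Type} (B : DD L Act) {n m : B.N} (hm : m ∈ B.Reach n)
    (hd : B.IsDecision m) (b : Bool) : B.succ m b ∈ B.Reach n :=
  Relation.ReflTransGen.tail hm ⟨hd, b, rfl⟩

lemma DD.iso_semNode {L Act : Type} (B : DD L Act) {n n' : B.N} (hiso : B.Iso n n')
    (f : L → Bool) : B.semNode f n = B.semNode f n' := by
  obtain ⟨φ, hbij, hroot, hlab, hsucc⟩ := hiso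
  suffices H : ∀ (k : ℕ) (m : B.N), B.rk m < k → m ∈ B.Reach n →
      B.semNode f m = B.semNode f (φ m) by
    have := H (B.rk n + 1) n (Nat.lt_succ_self _) (B.reach_self n)
    rw [this, hroot]
  intro k
  induction k with
  | zero => intro m hk; omega
  | succ k ih =>
    intro m hk hm
    cases hl : B.label m with
    | inl l =>
      have hd : B.IsDecision m := ⟨l, hl⟩
      have hl' : B.label (φ m) = Sum.inl l := by rw [hlab m hm, hl]
      rw [B.semNode_inl f m l hl, B.semNode_inl f (φ m) l hl', ← hsucc m hm hd (f l)]
      exact ih (B.succ m (f l)) (by have := B.rk_lt m (f l) l hl; omega)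
        (B.reach_succ hm hd (f l))
    | inr A =>
      rw [B.semNode_inr f m A hl, B.semNode_inr f (φ m) A (by rw [hlab m hm, hl])]

lemma DD.follow_append {L Act : Type} (B : DD L Act) (n : B.N) (l1 l2 : List Bool) :
    B.follow n (l1 ++ l2) = B.follow (B.follow n l1) l2 := by
  induction l1 generalizing n with
  | nil => rfl
  | cons b bs ih => simp [DD.follow, ih]

end AuxGeneric
section AuxCanon

variable {PVar Act : Type} [DecidableEq PVar]

/-- `h` depends on the variable `x`. -/
def Dep (h : (PVar → Bool) → Set Act) (x : PVar) : Prop :=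
  ∃ η, h (Function.update η x false) ≠ h (Function.update η x true)

lemma not_dep_update {h : (PVar → Bool) → Set Act} {x : PVar} (hx : ¬ Dep h x)
    (η : PVar → Bool) (b : Bool) : h (Function.update η x b) = h η := by
  have key : ∀ η, h (Function.update η x false) = h (Function.update η x true) := by
    intro η; by_contra hc; exact hx ⟨η, hc⟩
  have h2 : h (Function.update η x b) = h (Function.update η x (η x)) := by
    cases b <;> cases hb : η x <;> first | rfl | exact key η | exact (key η).symm
  rw [h2, Function.update_eq_self]

open Classical in
noncomputable def depSet [Fintype PVar] (h : (PVar → Bool) → Set Act) : Finset PVar :=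
  Finset.univ.filter (fun x => Dep h x)

open Classical in
lemma mem_depSet [Fintype PVar] {h : (PVar → Bool) → Set Act} {x : PVar} :
    x ∈ depSet h ↔ Dep h x := by
  simp [depSet]

lemma agree_on_deps [Fintype PVar] (h : (PVar → Bool) → Set Act)
    (η η' : PVar → Bool) (hag : ∀ x, Dep h x → η x = η' x) : h η = h η' := by
  classical
  suffices H : ∀ (n : ℕ) (η : PVar → Bool),
      (Finset.univ.filter fun x => η x ≠ η' x).card ≤ n →
      (∀ x, Dep h x → η x = η' x) → h η = h η' from H _ η le_rfl hag
  intro n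
  induction n with
  | zero =>
    intro η hc hag
    have : ∀ x, η x = η' x := by
      intro x
      by_contra hx
      have hmem : x ∈ Finset.univ.filter fun x => η x ≠ η' x := by simp [hx]
      have := Finset.card_pos.mpr ⟨x, hmem⟩
      omega
    exact congrArg h (funext this)
  | succ n ih =>
    intro η hc hag
    by_cases he : ∀ x, η x = η' x
    · exact congrArg h (funext he)
    · push_neg at he
      obtain ⟨x, hx⟩ := he
      have hnd : ¬ Dep h x := fun hd => hx (hag x hd)
      rw [(not_dep_update hnd η (η' x)).symm]
      apply ih
      · have hsub : (Finset.univ.filter fun y => Function.update η x (η' x) y ≠ η' y)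
            ⊆ (Finset.univ.filter fun y => η y ≠ η' y).erase x := by
          intro y hy
          simp only [Finset.mem_filter, Finset.mem_univ, true_and] at hy
          rcases eq_or_ne y x with rfl | hne
          · simp at hy
          · rw [Function.update_of_ne hne] at hy
            simp [Finset.mem_erase, hne, hy]
        have hxmem : x ∈ Finset.univ.filter fun y => η y ≠ η' y := by simp [hx]
        have h1 := Finset.card_le_card hsub
        rw [Finset.card_erase_of_mem hxmem] at h1
        omega
      · intro y hy
        rcases eq_or_ne y x with rfl | hne
        · simp
        · rw [Function.update_of_ne hne]; exact hag y hy

/-- Cofactor of `h` at variable `x` with bit `b`. -/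
def cof (h : (PVar → Bool) → Set Act) (x : PVar) (b : Bool) : (PVar → Bool) → Set Act :=
  fun η => h (Function.update η x b)

lemma dep_cof {h : (PVar → Bool) → Set Act} {x y : PVar} {b : Bool}
    (hy : Dep (cof h x b) y) : Dep h y ∧ y ≠ x := by
  obtain ⟨η, hη⟩ := hy
  have hyx : y ≠ x := by
    rintro rfl
    exact hη (by simp [cof, Function.update_idem])
  refine ⟨⟨Function.update η x b, ?_⟩, hyx⟩
  simpa [cof, Function.update_comm hyx] using hη

lemma depSet_cof_subset [Fintype PVar] (h : (PVar → Bool) → Set Act) (x : PVar) (b : Bool) :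
    depSet (cof h x b) ⊆ (depSet h).erase x := by
  intro y hy
  rw [mem_depSet] at hy
  obtain ⟨hd, hne⟩ := dep_cof hy
  simp [Finset.mem_erase, hne, mem_depSet, hd]

noncomputable def topVar [Fintype PVar] (π : PVar → ℕ) (h : (PVar → Bool) → Set Act)
    (hne : (depSet h).Nonempty) : PVar :=
  Classical.choose (Finset.exists_min_image (depSet h) π hne)

lemma topVar_mem [Fintype PVar] (π : PVar → ℕ) (h : (PVar → Bool) → Set Act)
    (hne : (depSet h).Nonempty) : topVar π h hne ∈ depSet h :=
  (Classical.choose_spec (Finset.exists_min_image (depSet h) π hne)).1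

lemma topVar_min [Fintype PVar] (π : PVar → ℕ) (h : (PVar → Bool) → Set Act)
    (hne : (depSet h).Nonempty) {y : PVar} (hy : y ∈ depSet h) :
    π (topVar π h hne) ≤ π y :=
  (Classical.choose_spec (Finset.exists_min_image (depSet h) π hne)).2 y hy

/-- The canonical reduced `π`-ordered BDD whose nodes are all functions
`(PVar → Bool) → Set Act` and whose root is `g`. -/
noncomputable def canon [Fintype PVar] [Fintype Act] (π : PVar → ℕ)
    (g : (PVar → Bool) → Set Act) : DD PVar Act where
  N := (PVar → Bool) → Set Act
  fin := Fintype.ofFinite _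
  label := fun h =>
    if hne : (depSet h).Nonempty then Sum.inl (topVar π h hne)
    else Sum.inr (h fun _ => false)
  succ := fun h b =>
    if hne : (depSet h).Nonempty then cof h (topVar π h hne) b else h
  root := g
  rk := fun h => (depSet h).card
  rk_lt := by
    intro n b l hl
    by_cases hne : (depSet n).Nonempty
    · simp only [hne, dif_pos]
      have h1 := Finset.card_le_card (depSet_cof_subset n (topVar π n hne) b)
      rw [Finset.card_erase_of_mem (topVar_mem π n hne)] at h1
      have h2 := Finset.card_pos.mpr hne
      omega
    · simp [hne] at hl

end AuxCanon
section AuxCanon2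

variable {PVar Act : Type} [DecidableEq PVar] [Fintype PVar] [Fintype Act]

lemma canon_label_pos (π : PVar → ℕ) (g h : (PVar → Bool) → Set Act)
    (hne : (depSet h).Nonempty) :
    (canon (Act := Act) π g).label h = Sum.inl (topVar π h hne) := by
  simp [canon, hne]

lemma canon_label_neg (π : PVar → ℕ) (g h : (PVar → Bool) → Set Act)
    (hne : ¬ (depSet h).Nonempty) :
    (canon (Act := Act) π g).label h = Sum.inr (h fun _ => false) := by
  simp [canon, hne]

lemma canon_succ_pos (π : PVar → ℕ) (g h : (PVar → Bool) → Set Act)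
    (hne : (depSet h).Nonempty) (b : Bool) :
    (canon (Act := Act) π g).succ h b = cof h (topVar π h hne) b := by
  simp [canon, hne]

lemma canon_semNode (π : PVar → ℕ) (g : (PVar → Bool) → Set Act)
    (f : PVar → Bool) (h : (PVar → Bool) → Set Act) :
    (canon (Act := Act) π g).semNode f h = h f := by
  suffices H : ∀ (n : ℕ) (h : (PVar → Bool) → Set Act), (depSet h).card ≤ n →
      (canon (Act := Act) π g).semNode f h = h f from H _ h le_rfl
  intro n
  induction n with
  | zero =>
    intro h hc
    have hne : ¬ (depSet h).Nonempty := by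
      rw [Finset.nonempty_iff_ne_empty]
      simp only [ne_eq, not_not]
      exact Finset.card_eq_zero.mp (Nat.le_zero.mp hc)
    rw [DD.semNode_inr (canon (Act := Act) π g) f h _ (canon_label_neg π g h hne)]
    refine agree_on_deps h _ f fun x hx => absurd (mem_depSet.mpr hx) ?_
    intro hmem
    exact hne ⟨x, hmem⟩
  | succ n ih =>
    intro h hc
    by_cases hne : (depSet h).Nonempty
    · rw [DD.semNode_inl (canon (Act := Act) π g) f h _ (canon_label_pos π g h hne),
        canon_succ_pos π g h hne]
      rw [ih _ ?card]
      case card =>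
        have h1 := Finset.card_le_card (depSet_cof_subset h (topVar π h hne) (f (topVar π h hne)))
        rw [Finset.card_erase_of_mem (topVar_mem π h hne)] at h1
        omega
      simp [cof, Function.update_eq_self]
    · rw [DD.semNode_inr (canon (Act := Act) π g) f h _ (canon_label_neg π g h hne)]
      refine agree_on_deps h _ f fun x hx => absurd (mem_depSet.mpr hx) ?_
      intro hmem
      exact hne ⟨x, hmem⟩

lemma canon_sem (π : PVar → ℕ) (g : (PVar → Bool) → Set Act) (f : PVar → Bool) :
    (canon (Act := Act) π g).sem f = g f :=
  canon_semNode π g f g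

lemma canon_reduced (π : PVar → ℕ) (g : (PVar → Bool) → Set Act) :
    (canon (Act := Act) π g).Reduced := by
  constructor
  · rintro n ⟨l, hl⟩ heq
    by_cases hne : (depSet n).Nonempty
    · have hx : Dep n (topVar π n hne) := mem_depSet.mp (topVar_mem π n hne)
      obtain ⟨η, hη⟩ := hx
      apply hη
      rw [canon_succ_pos π g n hne false, canon_succ_pos π g n hne true] at heq
      exact congrFun heq η
    · rw [canon_label_neg π g n hne] at hl
      exact absurd hl (by simp)
  · intro n n' hiso
    funext f
    have h1 := (canon (Act := Act) π g).iso_semNode hiso f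
    exact (canon_semNode π g f n).symm.trans (h1.trans (canon_semNode π g f n'))

lemma canon_ordered (π : PVar → ℕ) (hπ : Function.Injective π)
    (g : (PVar → Bool) → Set Act) : (canon (Act := Act) π g).Ordered π := by
  intro n b l l' hl hl'
  by_cases hne : (depSet n).Nonempty
  · rw [canon_label_pos π g n hne] at hl
    obtain rfl : topVar π n hne = l := by injection hl
    rw [canon_succ_pos π g n hne b] at hl'
    by_cases hne' : (depSet (cof n (topVar π n hne) b)).Nonempty
    · rw [canon_label_pos π g _ hne'] at hl'
      obtain rfl : topVar π (cof n (topVar π n hne) b) hne' = l' := by injection hl'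
      have hmem : topVar π (cof n (topVar π n hne) b) hne'
          ∈ depSet (cof n (topVar π n hne) b) := topVar_mem π _ hne'
      have hmem2 := depSet_cof_subset n (topVar π n hne) b hmem
      rw [Finset.mem_erase] at hmem2
      have hle := topVar_min π n hne hmem2.2
      rcases lt_or_eq_of_le hle with h | h
      · exact h
      · exact absurd (hπ h) (Ne.symm hmem2.1)
    · rw [canon_label_neg π g _ hne'] at hl'
      exact absurd hl' (by simp)
  · rw [canon_label_neg π g n hne] at hl
    exact absurd hl (by simp)

end AuxCanon2
section AuxGreedy

variable {PVar : Type} [DecidableEq PVar]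

open Classical in
/-- Greedy refinement of the candidate set `S` against `η`, processing
variables in increasing `π`-order up to level `t`. -/
noncomputable def refineUpTo (π : PVar → ℕ) (S : Set (PVar → Bool)) (η : PVar → Bool) :
    ℕ → Set (PVar → Bool)
  | 0 => S
  | t + 1 =>
    if h : ∃ x, π x = t then
      if ∃ τ ∈ refineUpTo π S η t, τ (Classical.choose h) = η (Classical.choose h) then
        {τ ∈ refineUpTo π S η t | τ (Classical.choose h) = η (Classical.choose h)}
      else refineUpTo π S η t
    else refineUpTo π S η t

lemma refine_succ_subset (π : PVar → ℕ) (S : Set (PVar → Bool)) (η : PVar → Bool) (t : ℕ) :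
    refineUpTo π S η (t + 1) ⊆ refineUpTo π S η t := by
  rw [refineUpTo]
  split
  · split
    · intro τ hτ; exact hτ.1
    · exact fun τ hτ => hτ
  · exact fun τ hτ => hτ

lemma refine_antitone (π : PVar → ℕ) (S : Set (PVar → Bool)) (η : PVar → Bool)
    {s t : ℕ} (hst : s ≤ t) : refineUpTo π S η t ⊆ refineUpTo π S η s := by
  induction t with
  | zero => rw [Nat.le_zero.mp hst]
  | succ t ih =>
    rcases Nat.lt_or_ge s (t + 1) with h | h
    · exact (refine_succ_subset π S η t).trans (ih (Nat.lt_succ_iff.mp h))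
    · rw [Nat.le_antisymm hst h]

lemma refine_self_mem (π : PVar → ℕ) (S : Set (PVar → Bool)) {η : PVar → Bool}
    (hη : η ∈ S) (t : ℕ) : η ∈ refineUpTo π S η t := by
  induction t with
  | zero => exact hη
  | succ t ih =>
    rw [refineUpTo]
    split
    · split
      · exact ⟨ih, rfl⟩
      · exact ih
    · exact ih

lemma refine_nonempty (π : PVar → ℕ) (S : Set (PVar → Bool)) (η : PVar → Bool)
    (hS : S.Nonempty) (t : ℕ) : (refineUpTo π S η t).Nonempty := by
  induction t with
  | zero => exact hS
  | succ t ih =>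
    rw [refineUpTo]
    split
    · split
      · rename_i hex
        obtain ⟨τ, hτ, hτx⟩ := hex
        exact ⟨τ, hτ, hτx⟩
      · exact ih
    · exact ih

/-- Any two survivors of refinement up to level `t` agree on all variables
below level `t`. -/
lemma refine_pairwise (π : PVar → ℕ) (hπ : Function.Injective π)
    (S : Set (PVar → Bool)) (η : PVar → Bool) :
    ∀ t, ∀ τ ∈ refineUpTo π S η t, ∀ τ' ∈ refineUpTo π S η t,
      ∀ y, π y < t → τ y = τ' y := by
  intro t
  induction t with
  | zero => intro τ _ τ' _ y hy; omega
  | succ t ih =>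
    intro τ hτ τ' hτ' y hy
    rcases Nat.lt_or_ge (π y) t with h | h
    · exact ih τ (refine_succ_subset π S η t hτ) τ' (refine_succ_subset π S η t hτ') y h
    · have hyt : π y = t := by omega
      rw [refineUpTo] at hτ hτ'
      by_cases hex : ∃ x, π x = t
      · have hxy : Classical.choose hex = y := hπ (by rw [Classical.choose_spec hex, hyt])
        rw [dif_pos hex] at hτ hτ'
        by_cases hmatch : ∃ τ ∈ refineUpTo π S η t, τ (Classical.choose hex) = η (Classical.choose hex)
        · rw [if_pos hmatch] at hτ hτ'
          rw [← hxy]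
          rw [hτ.2, hτ'.2]
        · rw [if_neg hmatch] at hτ hτ'
          push_neg at hmatch
          have h1 := hmatch τ hτ
          have h2 := hmatch τ' hτ'
          rw [← hxy]
          revert h1 h2
          cases τ (Classical.choose hex) <;> cases τ' (Classical.choose hex) <;>
            cases η (Classical.choose hex) <;> simp
      · exact absurd ⟨y, hyt⟩ hex

/-- A survivor at level `t` agrees below `t` with `η`, provided some element
of `S` agrees with `η` below `t₀ ≥ t`. -/
lemma refine_agree (π : PVar → ℕ) (hπ : Function.Injective π)
    (S : Set (PVar → Bool)) (η : PVar → Bool) {σ : PVar → Bool} (hσS : σ ∈ S)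
    {t₀ : ℕ} (hσ : ∀ y, π y < t₀ → σ y = η y) :
    ∀ t, t ≤ t₀ → σ ∈ refineUpTo π S η t ∧
      ∀ τ ∈ refineUpTo π S η t, ∀ y, π y < t → τ y = η y := by
  intro t
  induction t with
  | zero => intro _; exact ⟨hσS, fun τ _ y hy => absurd hy (by omega)⟩
  | succ t ih =>
    intro ht
    obtain ⟨hmem, hag⟩ := ih (by omega)
    rw [refineUpTo]
    by_cases hex : ∃ x, π x = t
    · rw [dif_pos hex]
      set x := Classical.choose hex with hxdef
      have hπx : π x = t := Classical.choose_spec hex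
      have hσx : σ x = η x := hσ x (by omega)
      have hmatch : ∃ τ ∈ refineUpTo π S η t, τ x = η x := ⟨σ, hmem, hσx⟩
      rw [if_pos hmatch]
      refine ⟨⟨hmem, hσx⟩, ?_⟩
      rintro τ ⟨hτ, hτx⟩ y hy
      rcases Nat.lt_or_ge (π y) t with h | h
      · exact hag τ hτ y h
      · have : y = x := hπ (by rw [hπx]; omega)
        rw [this, hτx]
    · rw [dif_neg hex]
      refine ⟨hmem, fun τ hτ y hy => ?_⟩
      rcases Nat.lt_or_ge (π y) t with h | h
      · exact hag τ hτ y h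
      · exact absurd ⟨y, by omega⟩ hex

/-- Flip lemma: if no survivor at level `π x` can match `η` at `x`, then the
refinement process is insensitive to the value of `η` at `x`. -/
lemma refine_flip (π : PVar → ℕ) (hπ : Function.Injective π)
    (S : Set (PVar → Bool)) (η : PVar → Bool) (x : PVar) (b : Bool)
    (hb : ∀ τ ∈ refineUpTo π S η (π x), τ x ≠ η x) :
    ∀ t, refineUpTo π S η t = refineUpTo π S (Function.update η x b) t := by
  intro t
  induction t with
  | zero => rfl
  | succ t ih =>
    rw [refineUpTo, refineUpTo, ← ih]
    by_cases hex : ∃ y, π y = t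
    · rw [dif_pos hex, dif_pos hex]
      set z := Classical.choose hex with hzdef
      have hπz : π z = t := Classical.choose_spec hex
      by_cases hzx : z = x
      · subst hzx
        -- the interesting level: no survivor matches η at z
        have ht : π z = t := hπz
        have hb' : ∀ τ ∈ refineUpTo π S η t, τ z ≠ η z := by
          intro τ hτ
          exact hb τ (by rw [ht]; exact hτ)
        rw [if_neg (by push_neg; intro τ hτ; exact hb' τ hτ)]
        rw [Function.update_self]
        by_cases hmatch : ∃ τ ∈ refineUpTo π S η t, τ z = b
        · rw [if_pos hmatch]
          ext τ
          constructor
          · intro hτ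
            refine ⟨hτ, ?_⟩
            have h1 := hb' τ hτ
            obtain ⟨τ₀, hτ₀, hτ₀z⟩ := hmatch
            have h0 := hb' τ₀ hτ₀
            -- τ z ≠ η z and τ₀ z ≠ η z and τ₀ z = b, so b ≠ η z, so τ z = b
            revert h1 h0 hτ₀z
            cases τ z <;> cases τ₀ z <;> cases η z <;> cases b <;> simp
          · exact fun hτ => hτ.1
        · rw [if_neg hmatch]
      · have hzx' : Function.update η x b z = η z := Function.update_of_ne hzx _ _
        rw [hzx']
    · rw [dif_neg hex, dif_neg hex]

end AuxGreedy
section AuxSel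

variable {PVar : Type} [DecidableEq PVar] [Fintype PVar]

noncomputable def selBound (π : PVar → ℕ) : ℕ := (Finset.univ.sup π) + 1

lemma lt_selBound (π : PVar → ℕ) (x : PVar) : π x < selBound π :=
  Nat.lt_succ_of_le (Finset.le_sup (Finset.mem_univ x))

noncomputable def sel (π : PVar → ℕ) (S : Set (PVar → Bool)) (hS : S.Nonempty)
    (η : PVar → Bool) : PVar → Bool :=
  (refine_nonempty π S η hS (selBound π)).choose

lemma sel_mem_refine (π : PVar → ℕ) (S : Set (PVar → Bool)) (hS : S.Nonempty)
    (η : PVar → Bool) : sel π S hS η ∈ refineUpTo π S η (selBound π) :=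
  (refine_nonempty π S η hS (selBound π)).choose_spec

lemma sel_mem (π : PVar → ℕ) (S : Set (PVar → Bool)) (hS : S.Nonempty)
    (η : PVar → Bool) : sel π S hS η ∈ S :=
  refine_antitone π S η (Nat.zero_le _) (sel_mem_refine π S hS η)

lemma sel_eq_of_mem (π : PVar → ℕ) (hπ : Function.Injective π) (S : Set (PVar → Bool))
    (hS : S.Nonempty) {η τ : PVar → Bool} (hτ : τ ∈ refineUpTo π S η (selBound π)) :
    sel π S hS η = τ :=
  funext fun y => refine_pairwise π hπ S η (selBound π) _ (sel_mem_refine π S hS η)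
    τ hτ y (lt_selBound π y)

lemma sel_self (π : PVar → ℕ) (hπ : Function.Injective π) (S : Set (PVar → Bool))
    (hS : S.Nonempty) {η : PVar → Bool} (hη : η ∈ S) : sel π S hS η = η :=
  sel_eq_of_mem π hπ S hS (refine_self_mem π S hη _)

end AuxSel
lemma DD.follow_take_succ {L Act : Type} (B : DD L Act) (bs : List Bool) (j : ℕ)
    (hj : j < bs.length) :
    B.follow B.root (bs.take (j + 1)) = B.succ (B.follow B.root (bs.take j)) (bs.get ⟨j, hj⟩) := by
  rw [List.take_succ, List.getElem?_eq_getElem hj]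
  rw [DD.follow_append]
  rfl
/-- The inductive step for path consistency in the canonical BDD. -/
lemma step_lemma {PVar Act : Type} [DecidableEq PVar] [Fintype PVar]
    (π : PVar → ℕ) (hπ : Function.Injective π)
    (S : Set (PVar → Bool)) (hS : S.Nonempty)
    (g : (PVar → Bool) → Set Act)
    (hg : ∀ η η', sel π S hS η = sel π S hS η' → g η = g η')
    (nd : (PVar → Bool) → Set Act) (η₀ : PVar → Bool) (hη₀S : η₀ ∈ S) (t : ℕ)
    (x : PVar) (hxdep : Dep nd x) (hxmin : ∀ y, Dep nd y → π x ≤ π y)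
    (Hdep : ∀ y, Dep nd y → t ≤ π y)
    (Hrep : ∀ η, nd η = g (fun y => if π y < t then η₀ y else η y))
    (b : Bool) :
    ∃ η' ∈ S, η' x = b ∧ (∀ y, π y < t → η' y = η₀ y) ∧
      (∀ y, Dep (cof nd x b) y → π x + 1 ≤ π y) ∧
      (∀ η, cof nd x b η = g (fun y => if π y < π x + 1 then η' y else η y)) := by
  have htx : t ≤ π x := Hdep x hxdep
  by_cases hA : ∃ η' ∈ S, (∀ y, π y < t → η' y = η₀ y) ∧ η' x = b
  · obtain ⟨η', hη'S, hagree, hη'x⟩ := hA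
    have hdepcof : ∀ y, Dep (cof nd x b) y → π x + 1 ≤ π y := by
      intro y hy
      obtain ⟨hdy, hyx⟩ := dep_cof hy
      have h1 := hxmin y hdy
      have h2 : π x ≠ π y := fun h => hyx (hπ h).symm
      omega
    refine ⟨η', hη'S, hη'x, hagree, hdepcof, ?_⟩
    intro η
    set ηhat := fun y => if π y < π x + 1 then η' y else η y with hηhat
    have e1 : cof nd x b η = cof nd x b ηhat := by
      apply agree_on_deps
      intro y hy
      have h1 := hdepcof y hy
      simp only [hηhat]
      rw [if_neg (by omega)]
    rw [e1]
    show nd (Function.update ηhat x b) = _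
    rw [Hrep (Function.update ηhat x b)]
    refine congrArg g ?_
    funext y
    by_cases hyt : π y < t
    · rw [if_pos hyt]
      simp only [hηhat]
      rw [if_pos (by omega)]
      exact (hagree y hyt).symm
    · rw [if_neg hyt]
      rcases eq_or_ne y x with rfl | hyx
      · rw [Function.update_self]
        simp only [hηhat]
        rw [if_pos (by omega)]
        exact hη'x.symm
      · rw [Function.update_of_ne hyx]
  · exfalso
    push_neg at hA
    obtain ⟨η₁, hη₁⟩ := hxdep
    apply hη₁
    rw [Hrep (Function.update η₁ x false), Hrep (Function.update η₁ x true)]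
    set ζ : Bool → (PVar → Bool) :=
      fun c => (fun y => if π y < t then η₀ y else Function.update η₁ x c y) with hζ
    show g (ζ false) = g (ζ true)
    have hζx : ∀ c, ζ c x = c := by
      intro c
      simp only [hζ]
      rw [if_neg (by omega), Function.update_self]
    have hζup : ∀ c, Function.update (ζ b) x c = ζ c := by
      intro c
      funext y
      rcases eq_or_ne y x with rfl | hyx
      · rw [Function.update_self, hζx]
      · rw [Function.update_of_ne hyx]
        simp only [hζ]
        rw [Function.update_of_ne hyx, Function.update_of_ne hyx]
    have hbflip : ∀ τ ∈ refineUpTo π S (ζ b) (π x), τ x ≠ ζ b x := by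
      intro τ hτ
      have hτS : τ ∈ S := refine_antitone π S (ζ b) (Nat.zero_le _) hτ
      have hσ : ∀ y, π y < t → η₀ y = ζ b y := by
        intro y hy
        simp only [hζ]
        rw [if_pos hy]
      have hτag : ∀ y, π y < t → τ y = η₀ y := by
        intro y hy
        have h2 := (refine_agree π hπ S (ζ b) hη₀S hσ t le_rfl).2 τ
          (refine_antitone π S (ζ b) htx hτ) y hy
        rw [h2, ← hσ y hy]
      rw [hζx b]
      exact hA τ hτS hτag
    have hflip := refine_flip π hπ S (ζ b) x (!b) hbflip (selBound π)
    have hsel : sel π S hS (ζ b) = sel π S hS (ζ (!b)) := by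
      apply sel_eq_of_mem π hπ S hS
      rw [hflip, hζup (!b)]
      exact sel_mem_refine π S hS (ζ (!b))
    have hgζ : g (ζ b) = g (ζ (!b)) := hg _ _ hsel
    cases hb2 : b
    · rw [hb2] at hgζ
      simpa using hgζ
    · rw [hb2] at hgζ
      simpa using hgζ.symm
/-- For every reduced `π`-ordered BDD `B`, bijection `γ` from
`PVar` onto predicates, and satisfiable formula `φ`, there is a reduced
`π`-ordered BDD `B'` all of whose root-to-action paths are `φ`-consistent
w.r.t. `γ` and which agrees with `B` on all lifted evaluations satisfying `φ`. -/
theorem phi_consistency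
    {Var PVar Act : Type} [Countable Var] [Fintype PVar] [Fintype Act]
    (B : DD PVar Act) (π : PVar → ℕ) (hπ : Function.Injective π)
    (hred : B.Reduced) (hord : B.Ordered π)
    (γ : PVar → APred Var) (hγ : Function.Injective γ)
    (φ : PForm Var) (hφ : ∃ ε : Var → ℚ, PForm.Sat ε φ) :
    ∃ B' : DD PVar Act, B'.Reduced ∧ B'.Ordered π ∧
      (∀ bs : List Bool, B'.IsPathToAction bs →
        ∃ ε : Var → ℚ, PForm.Sat ε φ ∧
          ∀ i, (h : i < bs.length) → ∀ x : PVar,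
            B'.label (B'.follow B'.root (bs.take i)) = Sum.inl x →
              (γ x).holds ε = bs.get ⟨i, h⟩) ∧
      (∀ ε : Var → ℚ, PForm.Sat ε φ →
        B'.sem (liftEval γ ε) = B.sem (liftEval γ ε)) := by
  classical
  set S : Set (PVar → Bool) := {η | ∃ ε : Var → ℚ, PForm.Sat ε φ ∧ liftEval γ ε = η} with hSdef
  have hS : S.Nonempty := ⟨liftEval γ hφ.choose, hφ.choose, hφ.choose_spec, rfl⟩
  set g : (PVar → Bool) → Set Act := fun η => B.sem (sel π S hS η) with hgdef
  have hg : ∀ η η', sel π S hS η = sel π S hS η' → g η = g η' := by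
    intro η η' h
    simp only [hgdef]
    rw [h]
  refine ⟨canon π g, canon_reduced π g, canon_ordered π hπ g, ?_, ?_⟩
  · -- path consistency
    intro bs hbs
    have hdec := hbs.1
    have main : ∀ i, ∀ _ : i ≤ bs.length, ∃ η₀, η₀ ∈ S ∧ ∃ t : ℕ,
        (∀ j (hj : j < i), ∀ x : PVar,
            (canon (Act := Act) π g).label
              ((canon (Act := Act) π g).follow (canon (Act := Act) π g).root (bs.take j))
              = Sum.inl x →
            η₀ x = bs.get ⟨j, by omega⟩ ∧ π x < t) ∧
        (∀ y, Dep ((canon (Act := Act) π g).follow (canon (Act := Act) π g).root (bs.take i)) y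
            → t ≤ π y) ∧
        (∀ η, (canon (Act := Act) π g).follow (canon (Act := Act) π g).root (bs.take i) η =
            g (fun y => if π y < t then η₀ y else η y)) := by
      intro i
      induction i with
      | zero =>
        intro hi
        refine ⟨hS.choose, hS.choose_spec, 0, ?_, ?_, ?_⟩
        · intro j hj; omega
        · intro y _; exact Nat.zero_le _
        · intro η
          show g η = g fun y => if π y < 0 then hS.choose y else η y
          refine congrArg g ?_
          funext y
          simp
      | succ i ih =>
        intro hi
        obtain ⟨η₀, hη₀S, t, Hbits, Hdep, Hrep⟩ := ih (by omega)
        have hilen : i < bs.length := by omega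
        have hdeci := hdec i hilen
        have hne : (depSet ((canon (Act := Act) π g).follow (canon (Act := Act) π g).root
            (bs.take i))).Nonempty := by
          by_contra hne
          obtain ⟨l, hl⟩ := hdeci
          rw [canon_label_neg π g _ hne] at hl
          exact absurd hl (by simp)
        obtain ⟨η', hη'S, hη'x, hagree, Hdep', Hrep'⟩ :=
          step_lemma π hπ S hS g hg
            ((canon (Act := Act) π g).follow (canon (Act := Act) π g).root (bs.take i))
            η₀ hη₀S t (topVar π _ hne) (mem_depSet.mp (topVar_mem π _ hne))
            (fun y hy => topVar_min π _ hne (mem_depSet.mpr hy)) Hdep Hrep (bs.get ⟨i, hilen⟩)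
        have hstep : (canon (Act := Act) π g).follow (canon (Act := Act) π g).root (bs.take (i + 1))
            = cof ((canon (Act := Act) π g).follow (canon (Act := Act) π g).root (bs.take i))
              (topVar π _ hne) (bs.get ⟨i, hilen⟩) := by
          rw [(canon (Act := Act) π g).follow_take_succ bs i hilen, canon_succ_pos π g _ hne]
        have htx : t ≤ π (topVar π _ hne) := Hdep _ (mem_depSet.mp (topVar_mem π _ hne))
        refine ⟨η', hη'S, π (topVar π _ hne) + 1, ?_, ?_, ?_⟩
        · intro j hj x' hx'
          rcases Nat.lt_or_ge j i with h | h
          · obtain ⟨h1, h2⟩ := Hbits j h x' hx'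
            exact ⟨by rw [hagree x' h2, h1], by omega⟩
          · have hji : j = i := by omega
            subst hji
            rw [canon_label_pos π g _ hne] at hx'
            obtain rfl : topVar π _ hne = x' := by injection hx'
            exact ⟨hη'x, by omega⟩
        · intro y hy
          rw [hstep] at hy
          exact Hdep' y hy
        · intro η
          rw [hstep]
          exact Hrep' η
    obtain ⟨η₀, hη₀S, t, Hbits, -, -⟩ := main bs.length le_rfl
    obtain ⟨ε, hε, hεη⟩ := hη₀S
    refine ⟨ε, hε, ?_⟩
    intro i h x hx
    have h1 := (Hbits i h x hx).1
    show (γ x).holds ε = bs.get ⟨i, h⟩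
    calc (γ x).holds ε = liftEval γ ε x := rfl
      _ = η₀ x := by rw [hεη]
      _ = bs.get ⟨i, h⟩ := h1
  · intro ε hε
    have hmem : liftEval γ ε ∈ S := ⟨ε, hε, rfl⟩
    show (canon (Act := Act) π g).sem (liftEval γ ε) = _
    rw [canon_sem]
    show B.sem (sel π S hS (liftEval γ ε)) = _
    rw [sel_self π hπ S hS hmem]
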